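/- Let Σ and Σ̄ be p×p real symmetric positive semidefinite matrices and let c ∈ [0, 1] be such that Σ ⪰ c·Σ̄ in the Loewner order. Then tr((Σ^{1/2} − Σ̄^{1/2})(Σ^{1/2} − Σ̄^{1/2})ᵀ) ≤ (tr(Σ) − tr(Σ̄)) + 2(1 − √c)·tr(Σ̄). -/

import Mathlib

open Matrix

open scoped ComplexOrder in
/-- The positive semidefinite square root of a positive semidefinite matrix
(the definition `Matrix.PosSemidef.sqrt` of the older Mathlib, since removed). -/
noncomputable def Matrix.PosSemidef.sqrt {n 𝕜 : Type*} [Fintype n] [RCLike 𝕜] [DecidableEq n]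
    {A : Matrix n n 𝕜} (hA : A.PosSemidef) : Matrix n n 𝕜 :=
  hA.1.eigenvectorUnitary.1 * diagonal ((↑) ∘ (√·) ∘ hA.1.eigenvalues) *
  (star hA.1.eigenvectorUnitary : Matrix n n 𝕜)


section Aux

variable {n : Type*} [Fintype n] [DecidableEq n]

namespace Matrix.PosSemidef

lemma sqrt_eq_cfc' {A : Matrix n n ℝ} (hA : A.PosSemidef) : hA.sqrt = cfc Real.sqrt A := by
  rw [hA.1.cfc_eq]
  simp only [Matrix.PosSemidef.sqrt, IsHermitian.cfc, Unitary.conjStarAlgAut_apply, Unitary.coe_star]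

lemma posSemidef_sqrt {A : Matrix n n ℝ} (hA : A.PosSemidef) : hA.sqrt.PosSemidef := by
  unfold Matrix.PosSemidef.sqrt
  rw [star_eq_conjTranspose]
  exact (PosSemidef.diagonal (fun i => Real.sqrt_nonneg _)).mul_mul_conjTranspose_same _

lemma sqrt_mul_self {A : Matrix n n ℝ} (hA : A.PosSemidef) : hA.sqrt * hA.sqrt = A := by
  have hAs : IsSelfAdjoint A := hA.1
  rw [sqrt_eq_cfc', ← cfc_mul Real.sqrt Real.sqrt A]
  conv_rhs => rw [← cfc_id ℝ A]
  refine cfc_congr fun x hx => ?_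
  rw [hA.1.spectrum_real_eq_range_eigenvalues] at hx
  obtain ⟨i, rfl⟩ := hx
  exact Real.mul_self_sqrt (hA.eigenvalues_nonneg i)

lemma sq_sqrt {A : Matrix n n ℝ} (hA : A.PosSemidef) : hA.sqrt ^ 2 = A := by
  rw [sq, hA.sqrt_mul_self]

lemma eq_sqrt_of_sq_eq {B : Matrix n n ℝ} (hB : B.PosSemidef) {A : Matrix n n ℝ}
    (hA : A.PosSemidef) (h : B ^ 2 = A) : B = hA.sqrt := by
  have hBs : IsSelfAdjoint B := hB.1
  rw [sqrt_eq_cfc', ← h, ← cfc_comp_pow Real.sqrt 2 B]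
  conv_lhs => rw [← cfc_id ℝ B]
  refine cfc_congr fun x hx => ?_
  rw [hB.1.spectrum_real_eq_range_eigenvalues] at hx
  obtain ⟨i, rfl⟩ := hx
  exact (Real.sqrt_sq (hB.eigenvalues_nonneg i)).symm

end Matrix.PosSemidef

lemma psd_trace_nonneg' {M : Matrix n n ℝ} (hM : M.PosSemidef) : 0 ≤ M.trace := by
  rw [Matrix.trace]
  refine Finset.sum_nonneg fun i _ => ?_
  have := hM.dotProduct_mulVec_nonneg (Pi.single i 1)
  simpa [dotProduct, Matrix.mulVec_single, Pi.single_apply] using this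

lemma psd_trace_mul_nonneg' {A B : Matrix n n ℝ} (hA : A.PosSemidef) (hB : B.PosSemidef) :
    0 ≤ (A * B).trace := by
  obtain ⟨C, rfl⟩ : ∃ C : Matrix n n ℝ, B = Cᵀ * C :=
    ⟨hB.sqrt, by
      rw [← conjTranspose_eq_transpose_of_trivial, hB.posSemidef_sqrt.1.eq, hB.sqrt_mul_self]⟩
  rw [← Matrix.mul_assoc, Matrix.trace_mul_comm, ← Matrix.mul_assoc]
  exact psd_trace_nonneg' ((hA.mul_mul_conjTranspose_same C))

lemma psd_smul' {B : Matrix n n ℝ} (hB : B.PosSemidef) {c : ℝ} (hc : 0 ≤ c) :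
    (c • B).PosSemidef := by
  refine .of_dotProduct_mulVec_nonneg ?_ ?_
  · unfold Matrix.IsHermitian
    rw [Matrix.conjTranspose_smul, star_trivial, hB.1.eq]
  · intro x
    rw [Matrix.smul_mulVec, dotProduct_smul]
    exact mul_nonneg hc (by simpa using hB.dotProduct_mulVec_nonneg x)

/-- Operator monotonicity of the matrix square root. -/
lemma sqrt_loewner_mono' {A B : Matrix n n ℝ} (hA : A.PosSemidef) (hB : B.PosSemidef)
    (h : (A - B).PosSemidef) : (hA.sqrt - hB.sqrt).PosSemidef := by
  set S := hA.sqrt with hSdef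
  set T := hB.sqrt with hTdef
  have hS := hA.posSemidef_sqrt
  have hT := hB.posSemidef_sqrt
  have hD : (S - T).IsHermitian := hS.1.sub hT.1
  have hDt : (S - T)ᵀ = S - T := by
    have := hD.eq
    simpa [Matrix.conjTranspose_eq_transpose_of_trivial] using this
  refine hD.posSemidef_iff_eigenvalues_nonneg.mpr fun i => show 0 ≤ hD.eigenvalues i from ?_
  by_contra hneg
  push_neg at hneg
  set lam := hD.eigenvalues i with hlam
  set v : n → ℝ := ⇑(hD.eigenvectorBasis i) with hvdef
  have hv : (S - T) *ᵥ v = lam • v := hD.mulVec_eigenvectorBasis i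
  have hvne : v ≠ 0 := by
    intro h0
    apply hD.eigenvectorBasis.orthonormal.ne_zero i
    ext j
    exact congrFun h0 j
  have hid : (S + T) * (S - T) + (S - T) * (S + T) = (2:ℝ) • (A - B) := by
    have hS2 : S * S = A := hA.sqrt_mul_self
    have hT2 : T * T = B := hB.sqrt_mul_self
    have : (S + T) * (S - T) + (S - T) * (S + T) = S * S + S * S - (T * T + T * T) := by
      noncomm_ring
    rw [this, hS2, hT2, two_smul, sub_add_sub_comm]
  set q : ℝ := v ⬝ᵥ ((S + T) *ᵥ v) with hq
  set r : ℝ := v ⬝ᵥ ((A - B) *ᵥ v) with hr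
  have key : lam * q = r := by
    have h1 : v ⬝ᵥ (((S + T) * (S - T)) *ᵥ v) = lam * q := by
      rw [← Matrix.mulVec_mulVec, hv, Matrix.mulVec_smul, dotProduct_smul]
      rfl
    have h2 : v ⬝ᵥ (((S - T) * (S + T)) *ᵥ v) = lam * q := by
      rw [← Matrix.mulVec_mulVec, Matrix.dotProduct_mulVec, ← Matrix.mulVec_transpose,
        hDt, hv, smul_dotProduct]
      rfl
    have h3 : v ⬝ᵥ ((((S + T) * (S - T) + (S - T) * (S + T))) *ᵥ v) = 2 * r := by
      rw [hid, Matrix.smul_mulVec, dotProduct_smul]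
      rfl
    rw [Matrix.add_mulVec, dotProduct_add, h1, h2] at h3
    linarith
  have hr0 : 0 ≤ r := by simpa using h.dotProduct_mulVec_nonneg v
  have hqS : 0 ≤ v ⬝ᵥ (S *ᵥ v) := by simpa using hS.dotProduct_mulVec_nonneg v
  have hqT : 0 ≤ v ⬝ᵥ (T *ᵥ v) := by simpa using hT.dotProduct_mulVec_nonneg v
  have hqsplit : q = v ⬝ᵥ (S *ᵥ v) + v ⬝ᵥ (T *ᵥ v) := by
    rw [hq, Matrix.add_mulVec, dotProduct_add]
  have hq0 : q ≤ 0 := by nlinarith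
  have hqS0 : v ⬝ᵥ (S *ᵥ v) = 0 := by linarith
  have hqT0 : v ⬝ᵥ (T *ᵥ v) = 0 := by linarith
  have hSv : S *ᵥ v = 0 := (hS.dotProduct_mulVec_zero_iff v).mp (by simpa using hqS0)
  have hTv : T *ᵥ v = 0 := (hT.dotProduct_mulVec_zero_iff v).mp (by simpa using hqT0)
  have : lam • v = 0 := by rw [← hv, Matrix.sub_mulVec, hSv, hTv, sub_zero]
  rcases smul_eq_zero.mp this with h0 | h0
  · exact absurd h0 (ne_of_lt hneg)
  · exact hvne h0

lemma sqrt_smul'' {B : Matrix n n ℝ} (hB : B.PosSemidef) {c : ℝ} (hc : 0 ≤ c)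
    (hcB : (c • B).PosSemidef) : hcB.sqrt = Real.sqrt c • hB.sqrt := by
  have h1 : (Real.sqrt c • hB.sqrt).IsHermitian := by
    unfold Matrix.IsHermitian
    rw [Matrix.conjTranspose_smul, star_trivial, hB.posSemidef_sqrt.1.eq]
  have hP : (Real.sqrt c • hB.sqrt).PosSemidef := by
    refine .of_dotProduct_mulVec_nonneg h1 fun x => ?_
    rw [Matrix.smul_mulVec, dotProduct_smul]
    exact mul_nonneg (Real.sqrt_nonneg c) (by simpa using hB.posSemidef_sqrt.dotProduct_mulVec_nonneg x)
  symm
  refine hP.eq_sqrt_of_sq_eq hcB ?_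
  rw [smul_pow, hB.sq_sqrt, Real.sq_sqrt hc]

end Aux

/-- If `Σ ⪰ c·Σ̄` in the Loewner order for PSD matrices `Σ, Σ̄` and
`c ∈ [0,1]`, then
`tr((Σ^{1/2} − Σ̄^{1/2})(Σ^{1/2} − Σ̄^{1/2})ᵀ) ≤ (tr Σ − tr Σ̄) + 2(1 − √c)·tr Σ̄`. -/
theorem trace_sq_diff_sqrt_le
    (p : ℕ) {Sig Sbar : Matrix (Fin p) (Fin p) ℝ}
    (hSig : Sig.PosSemidef) (hSbar : Sbar.PosSemidef)
    (c : ℝ) (hc0 : 0 ≤ c) (hc1 : c ≤ 1)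
    (hLoew : (Sig - c • Sbar).PosSemidef) :
    ((hSig.sqrt - hSbar.sqrt) * (hSig.sqrt - hSbar.sqrt)ᵀ).trace ≤
      (Sig.trace - Sbar.trace) + 2 * (1 - Real.sqrt c) * Sbar.trace := by
  set S := hSig.sqrt with hSdef
  set T := hSbar.sqrt with hTdef
  have hS := hSig.posSemidef_sqrt
  have hT := hSbar.posSemidef_sqrt
  have hDt : (S - T)ᵀ = S - T := by
    have := (hS.1.sub hT.1).eq
    simpa [Matrix.conjTranspose_eq_transpose_of_trivial] using this
  -- monotonicity gives S - √c • T ⪰ 0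
  have hcB : (c • Sbar).PosSemidef := psd_smul' hSbar hc0
  have hmono : (S - hcB.sqrt).PosSemidef := sqrt_loewner_mono' hSig hcB hLoew
  rw [sqrt_smul'' hSbar hc0 hcB] at hmono
  -- hence √c * tr Σ̄ ≤ tr (S * T)
  have htr : 0 ≤ ((S - Real.sqrt c • T) * T).trace :=
    psd_trace_mul_nonneg' hmono hT
  have hsub : (S - Real.sqrt c • T) * T = S * T - Real.sqrt c • (T * T) := by
    rw [Matrix.sub_mul, Matrix.smul_mul]
  rw [hsub, Matrix.trace_sub, Matrix.trace_smul, hSbar.sqrt_mul_self, smul_eq_mul] at htr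
  -- expand the left-hand side
  have hexp : (S - T) * (S - T) = S * S - S * T - (T * S - T * T) := by noncomm_ring
  have hS2 : (S * S).trace = Sig.trace := by rw [hSig.sqrt_mul_self]
  have hT2 : (T * T).trace = Sbar.trace := by rw [hSbar.sqrt_mul_self]
  have hTS : (T * S).trace = (S * T).trace := Matrix.trace_mul_comm T S
  rw [hDt, hexp, Matrix.trace_sub, Matrix.trace_sub, Matrix.trace_sub, hS2, hT2, hTS]
  linarith
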